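/- Let p > 2 and C > 0, and let f : [0,∞) → [0,∞) be differentiable with f'(t) + C f(t)^{p-1} ≤ 0 for all t ≥ 0. Then f(t) ≤ ((p-2)·C·t)^{-1/(p-2)} for all t > 0; in particular the decay rate is independent of f(0). -/

import Mathlib

open Real

/-- Sharp, initial-datum-independent polynomial decay for `f' + C f^{p-1} ≤ 0`, `p > 2`. -/
theorem ode_sharp_decay (p C : ℝ) (hp : 2 < p) (hC : 0 < C)
    (f : ℝ → ℝ) (hpos : ∀ t ≥ (0:ℝ), 0 ≤ f t)
    (hdiff : ∀ t ≥ (0:ℝ), DifferentiableAt ℝ f t)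
    (hineq : ∀ t ≥ (0:ℝ), deriv f t + C * f t ^ (p - 1) ≤ 0) :
    ∀ t : ℝ, 0 < t → f t ≤ ((p - 2) * C * t) ^ (-(1 / (p - 2))) := by
  intro t ht
  have hp2 : 0 < p - 2 := by linarith
  have hbase : 0 < (p - 2) * C * t := by positivity
  rcases eq_or_lt_of_le (hpos t ht.le) with h0 | hft
  · rw [← h0]
    exact (Real.rpow_pos_of_pos hbase _).le
  -- f is antitone on [0, t]
  have hderiv_nonpos : ∀ s ≥ (0:ℝ), deriv f s ≤ 0 := by
    intro s hs
    have h1 := hineq s hs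
    have h2 : 0 ≤ C * f s ^ (p - 1) :=
      mul_nonneg hC.le (Real.rpow_nonneg (hpos s hs) _)
    linarith
  have hanti : AntitoneOn f (Set.Icc 0 t) := by
    apply antitoneOn_of_deriv_nonpos (convex_Icc 0 t)
    · exact fun s hs => (hdiff s hs.1).continuousAt.continuousWithinAt
    · intro s hs
      rw [interior_Icc] at hs
      exact (hdiff s hs.1.le).differentiableWithinAt
    · intro s hs
      rw [interior_Icc] at hs
      exact hderiv_nonpos s hs.1.le
  have hfpos : ∀ s ∈ Set.Icc (0:ℝ) t, 0 < f s := fun s hs =>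
    lt_of_lt_of_le hft (hanti hs (Set.right_mem_Icc.mpr ht.le) hs.2)
  -- φ s = f s ^ (2 - p) - (p-2)*C*s is monotone on [0,t]
  set φ : ℝ → ℝ := fun s => f s ^ (2 - p) - (p - 2) * C * s with hφ
  have hmono : MonotoneOn φ (Set.Icc 0 t) := by
    apply monotoneOn_of_deriv_nonneg (convex_Icc 0 t)
    · apply ContinuousOn.sub
      · exact ContinuousOn.rpow_const
          (fun s hs => (hdiff s hs.1).continuousAt.continuousWithinAt)
          (fun s hs => Or.inl (hfpos s hs).ne')
      · fun_prop
    · intro s hs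
      rw [interior_Icc] at hs
      have hd : HasDerivAt φ
          (deriv f s * (2 - p) * f s ^ (2 - p - 1) - (p - 2) * C) s := by
        apply HasDerivAt.sub
        · exact ((hdiff s hs.1.le).hasDerivAt).rpow_const
            (Or.inl (hfpos s ⟨hs.1.le, hs.2.le⟩).ne')
        · simpa using (hasDerivAt_id s).const_mul ((p - 2) * C)
      exact hd.differentiableAt.differentiableWithinAt
    · intro s hs
      rw [interior_Icc] at hs
      have hfs : 0 < f s := hfpos s ⟨hs.1.le, hs.2.le⟩
      have hd : HasDerivAt φ
          (deriv f s * (2 - p) * f s ^ (2 - p - 1) - (p - 2) * C) s := by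
        apply HasDerivAt.sub
        · exact ((hdiff s hs.1.le).hasDerivAt).rpow_const (Or.inl hfs.ne')
        · simpa using (hasDerivAt_id s).const_mul ((p - 2) * C)
      rw [hd.deriv]
      have h1 : deriv f s ≤ -(C * f s ^ (p - 1)) := by
        have := hineq s hs.1.le; linarith
      have hpow : (0:ℝ) < f s ^ (2 - p - 1) := Real.rpow_pos_of_pos hfs _
      have key : -(C * f s ^ (p - 1)) * (2 - p) * f s ^ (2 - p - 1)
          = (p - 2) * C := by
        have : f s ^ (p - 1) * f s ^ (2 - p - 1) = 1 := by
          rw [← Real.rpow_add hfs]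
          have h0 : p - 1 + (2 - p - 1) = 0 := by ring
          rw [h0, Real.rpow_zero]
        calc -(C * f s ^ (p - 1)) * (2 - p) * f s ^ (2 - p - 1)
            = (p - 2) * C * (f s ^ (p - 1) * f s ^ (2 - p - 1)) := by ring
          _ = (p - 2) * C := by rw [this, mul_one]
      have h2 : (p - 2) * C ≤ deriv f s * (2 - p) * f s ^ (2 - p - 1) := by
        rw [← key]
        have h2p : (2 - p) ≤ 0 := by linarith
        have := mul_le_mul_of_nonpos_right h1 h2p
        exact mul_le_mul_of_nonneg_right this hpow.le
      linarith
  -- conclude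
  have hkey : (p - 2) * C * t ≤ f t ^ (2 - p) := by
    have := hmono (Set.left_mem_Icc.mpr ht.le) (Set.right_mem_Icc.mpr ht.le) ht.le
    simp only [hφ] at this
    have h0' : 0 < f 0 ^ (2 - p) :=
      Real.rpow_pos_of_pos (hfpos 0 (Set.left_mem_Icc.mpr ht.le)) _
    linarith
  have hexp : -(1 / (p - 2)) ≤ 0 := by
    have : 0 < 1 / (p - 2) := by positivity
    linarith
  have := Real.rpow_le_rpow_of_nonpos hbase hkey hexp
  calc f t = (f t ^ (2 - p)) ^ (-(1 / (p - 2))) := by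
        rw [← Real.rpow_mul hft.le]
        have : (2 - p) * -(1 / (p - 2)) = 1 := by
          field_simp
          ring
        rw [this, Real.rpow_one]
    _ ≤ ((p - 2) * C * t) ^ (-(1 / (p - 2))) := this
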